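/- For any i in {0,...,m−1} and r in {0,...,ζ−1}, one has Σ_{r=0}^{ζ−1}[1+4L̃² sin²(π(i+rm)/(ζm))]^{−M} ≤ Σ_{r=0}^{ζ−1}[1+4L̃² sin²(πr/ζ)]^{−M} for all L̃ > 0 and positive integer M; i.e., the aliased eigenvalue sum of a periodic diffusion covariance under uniform subsampling is maximized at the zero-frequency mode. -/

import Mathlib

open Finset Complex

-- Lemma 1: expansion of cos^k as trig polynomial with nonneg coefficients
lemma cos_pow_expand (x : ℝ) (k : ℕ) :
    Real.cos x ^ k = ∑ l ∈ Finset.range (k+1),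
      ((k.choose l : ℝ)/2^k) * Real.cos (((2*(l:ℝ) - k)) * x) := by
  have key : ((Real.cos x : ℝ) : ℂ) ^ k = ∑ l ∈ Finset.range (k+1),
      (((k.choose l : ℝ)/2^k : ℝ) : ℂ) * Complex.exp ((((2*(l:ℝ) - k) * x : ℝ)) * Complex.I) := by
    rw [Complex.ofReal_cos, Complex.cos]
    rw [div_pow, add_pow]
    rw [Finset.sum_div]
    refine Finset.sum_congr rfl fun l hl => ?_
    have hlk : l ≤ k := by simpa using Nat.lt_succ_iff.mp (Finset.mem_range.mp hl)
    have e1 : Complex.exp (↑x * I) ^ l = Complex.exp (l * (↑x * I)) :=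
      (Complex.exp_nat_mul _ l).symm
    have e2 : Complex.exp (-↑x * I) ^ (k - l) = Complex.exp ((k-l : ℕ) * (-↑x * I)) :=
      (Complex.exp_nat_mul _ (k-l)).symm
    rw [e1, e2, ← Complex.exp_add]
    have e3 : (l : ℂ) * (↑x * I) + ((k-l : ℕ) : ℂ) * (-↑x * I)
        = (((2*(l:ℝ) - k) * x : ℝ)) * Complex.I := by
      push_cast [Nat.cast_sub hlk]
      ring
    rw [e3]
    push_cast
    ring
  have h1 : Real.cos x ^ k = (((Real.cos x : ℝ):ℂ)^k).re := by
    rw [← Complex.ofReal_pow, Complex.ofReal_re]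
  rw [h1, key, Complex.re_sum]
  refine Finset.sum_congr rfl fun l hl => ?_
  rw [Complex.re_ofReal_mul, Complex.exp_ofReal_mul_I_re]

-- Lemma 2: roots of unity sum
lemma cos_sum_aliased (ζ : ℕ) (hζ : 0 < ζ) (j : ℤ) (φ : ℝ) :
    ∑ r ∈ Finset.range ζ, Real.cos (φ + 2*Real.pi*j*r/ζ) =
      if (ζ:ℤ) ∣ j then ζ * Real.cos φ else 0 := by
  have hζ' : (ζ : ℝ) ≠ 0 := Nat.cast_ne_zero.mpr hζ.ne'
  have hζc : (ζ : ℂ) ≠ 0 := Nat.cast_ne_zero.mpr hζ.ne'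
  set z : ℂ := Complex.exp ((2*Real.pi*j/ζ : ℝ) * Complex.I) with hz
  have hzr : ∀ r : ℕ, Complex.exp ((φ + 2*Real.pi*j*r/ζ : ℝ) * Complex.I)
      = Complex.exp ((φ:ℝ) * Complex.I) * z ^ r := by
    intro r
    rw [hz, ← Complex.exp_nat_mul, ← Complex.exp_add]
    congr 1
    push_cast
    field_simp
  have hre : ∑ r ∈ Finset.range ζ, Real.cos (φ + 2*Real.pi*j*r/ζ)
      = (Complex.exp ((φ:ℝ) * Complex.I) * ∑ r ∈ Finset.range ζ, z ^ r).re := by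
    rw [Finset.mul_sum, Complex.re_sum]
    refine Finset.sum_congr rfl fun r _ => ?_
    rw [← hzr, Complex.exp_ofReal_mul_I_re]
  rw [hre]
  by_cases hdvd : (ζ:ℤ) ∣ j
  · obtain ⟨t, ht⟩ := hdvd
    have hz1 : z = 1 := by
      rw [hz]
      have : ((2*Real.pi*j/ζ : ℝ) : ℂ) * Complex.I = (t : ℤ) * (2 * Real.pi * Complex.I) := by
        push_cast [ht]
        field_simp
      rw [this, Complex.exp_int_mul_two_pi_mul_I]
    have hsum : ∑ r ∈ Finset.range ζ, z ^ r = (ζ : ℂ) := by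
      simp [hz1]
    rw [hsum, if_pos ⟨t, ht⟩]
    have hc : ((ζ:ℕ):ℂ) = ((ζ:ℝ):ℂ) := by push_cast; rfl
    rw [mul_comm, hc, Complex.re_ofReal_mul, Complex.exp_ofReal_mul_I_re]
  · have hzne : z ≠ 1 := by
      intro h
      apply hdvd
      rw [hz, Complex.exp_eq_one_iff] at h
      obtain ⟨n, hn⟩ := h
      have h3 : (2*Real.pi*(j:ℝ)/ζ : ℝ) = n * (2*Real.pi) := by
        have him := congrArg Complex.im hn
        simpa using him
      have hp : (0:ℝ) < 2*Real.pi := by positivity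
      have h4 : (j:ℝ) = n * ζ := by
        field_simp at h3
        nlinarith [h3, hp]
      have h5 : j = n * ζ := by exact_mod_cast h4
      exact ⟨n, by linarith [h5]⟩
    have hzpow : z ^ ζ = 1 := by
      rw [hz, ← Complex.exp_nat_mul]
      have : (ζ:ℂ) * (((2*Real.pi*j/ζ : ℝ) : ℂ) * Complex.I) = (j:ℤ) * (2*Real.pi*Complex.I) := by
        push_cast
        field_simp
      rw [this, Complex.exp_int_mul_two_pi_mul_I]
    rw [geom_sum_eq hzne, hzpow]
    simp [hdvd]

-- Lemma 3: comparison of sums of powers of cosines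
lemma cos_pow_sum_le (m ζ : ℕ) (hm : 0 < m) (hζ : 0 < ζ) (i k : ℕ) :
    ∑ r ∈ Finset.range ζ, Real.cos (2*Real.pi*((i:ℝ) + r*m)/(ζ*m)) ^ k ≤
    ∑ r ∈ Finset.range ζ, Real.cos (2*Real.pi*(r:ℝ)/ζ) ^ k := by
  have hm' : (m:ℝ) ≠ 0 := Nat.cast_ne_zero.mpr hm.ne'
  have hζ' : (ζ:ℝ) ≠ 0 := Nat.cast_ne_zero.mpr hζ.ne'
  calc ∑ r ∈ Finset.range ζ, Real.cos (2*Real.pi*((i:ℝ) + r*m)/(ζ*m)) ^ k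
      = ∑ l ∈ Finset.range (k+1), ∑ r ∈ Finset.range ζ,
          ((k.choose l : ℝ)/2^k) * Real.cos ((2*(l:ℝ)-k) * (2*Real.pi*((i:ℝ) + r*m)/(ζ*m))) := by
        rw [Finset.sum_comm]
        exact Finset.sum_congr rfl fun r _ => cos_pow_expand _ k
    _ ≤ ∑ l ∈ Finset.range (k+1), ∑ r ∈ Finset.range ζ,
          ((k.choose l : ℝ)/2^k) * Real.cos ((2*(l:ℝ)-k) * (2*Real.pi*(r:ℝ)/ζ)) := by
        refine Finset.sum_le_sum fun l hl => ?_
        rw [← Finset.mul_sum, ← Finset.mul_sum]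
        refine mul_le_mul_of_nonneg_left ?_ (by positivity)
        have hL : ∀ r : ℕ, (2*(l:ℝ)-k) * (2*Real.pi*((i:ℝ) + r*m)/(ζ*m))
            = 2*Real.pi*(i:ℝ)*(2*(l:ℝ)-k)/(ζ*m) + 2*Real.pi*((2*(l:ℤ)-k : ℤ):ℝ)*r/ζ := by
          intro r; push_cast; field_simp
        have hR : ∀ r : ℕ, (2*(l:ℝ)-k) * (2*Real.pi*(r:ℝ)/ζ)
            = 0 + 2*Real.pi*((2*(l:ℤ)-k : ℤ):ℝ)*r/ζ := by
          intro r; push_cast; ring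
        calc ∑ r ∈ Finset.range ζ, Real.cos ((2*(l:ℝ)-k) * (2*Real.pi*((i:ℝ) + r*m)/(ζ*m)))
            = if (ζ:ℤ) ∣ (2*(l:ℤ)-k) then ζ * Real.cos (2*Real.pi*(i:ℝ)*(2*(l:ℝ)-k)/(ζ*m)) else 0 := by
              rw [← cos_sum_aliased ζ hζ (2*(l:ℤ)-k) _]
              exact Finset.sum_congr rfl fun r _ => by rw [hL r]
          _ ≤ if (ζ:ℤ) ∣ (2*(l:ℤ)-k) then ζ * Real.cos 0 else 0 := by
              split_ifs
              · exact mul_le_mul_of_nonneg_left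
                  (by rw [Real.cos_zero]; exact Real.cos_le_one _) (Nat.cast_nonneg ζ)
              · exact le_refl 0
          _ = ∑ r ∈ Finset.range ζ, Real.cos ((2*(l:ℝ)-k) * (2*Real.pi*(r:ℝ)/ζ)) := by
              rw [← cos_sum_aliased ζ hζ (2*(l:ℤ)-k) 0]
              exact (Finset.sum_congr rfl fun r _ => by rw [hR r])
    _ = ∑ r ∈ Finset.range ζ, Real.cos (2*Real.pi*(r:ℝ)/ζ) ^ k := by
        rw [Finset.sum_comm]
        exact Finset.sum_congr rfl fun r _ => (cos_pow_expand _ k).symm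

-- Lemma 4: binomial series for the inverse power
lemma hasSum_inv_pow {a b : ℝ} (ha : 0 < a) (hb : 0 < b) (hba : b < a) (M : ℕ) (hM : 0 < M)
    (c : ℝ) (hc : |c| ≤ 1) :
    HasSum (fun n : ℕ => ((n + (M-1)).choose (M-1) : ℝ) * (b/a)^n / a^M * c^n)
      (((a - b*c)^M)⁻¹) := by
  have hr : ‖b*c/a‖ < 1 := by
    rw [Real.norm_eq_abs, abs_div, abs_mul, abs_of_pos ha, abs_of_pos hb]
    rw [div_lt_one ha]
    nlinarith [abs_le.mp hc, abs_nonneg c]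
  have H := hasSum_choose_mul_geometric_of_norm_lt_one (𝕜 := ℝ) (M-1) hr
  have hM1 : M - 1 + 1 = M := Nat.succ_pred_eq_of_pos hM
  rw [hM1] at H
  have habc : 0 < a - b*c := by nlinarith [abs_le.mp hc]
  have H2 := H.mul_right (a^M)⁻¹
  have hval : (1:ℝ)/(1 - b*c/a)^M * (a^M)⁻¹ = ((a - b*c)^M)⁻¹ := by
    have h1 : 1 - b*c/a = (a - b*c)/a := by field_simp
    rw [h1, div_pow, one_div, inv_div]
    field_simp
  rw [hval] at H2
  have hf : (fun n : ℕ => ((n + (M-1)).choose (M-1) : ℝ) * (b/a)^n / a^M * c^n)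
      = (fun i : ℕ => ((i + (M - 1)).choose (M - 1) : ℝ) * (b * c / a) ^ i * (a ^ M)⁻¹) := by
    funext n
    ring
  rw [hf]
  exact H2

theorem stmt18 (m ζ : ℕ) (hm : 0 < m) (hζ : 0 < ζ)
    (L : ℝ) (hL : 0 < L) (M : ℕ) (hM : 0 < M) :
    ∀ i : ℕ, i < m →
      ∑ r ∈ Finset.range ζ,
        ((1 + 4 * L ^ 2 * Real.sin (Real.pi * ((i : ℝ) + r * m) / (ζ * m)) ^ 2) ^ M)⁻¹ ≤
      ∑ r ∈ Finset.range ζ,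
        ((1 + 4 * L ^ 2 * Real.sin (Real.pi * (r : ℝ) / ζ) ^ 2) ^ M)⁻¹ := by
  intro i _
  set a : ℝ := 1 + 2*L^2 with ha_def
  set b : ℝ := 2*L^2 with hb_def
  have ha : 0 < a := by positivity
  have hb : 0 < b := by positivity
  have hba : b < a := by simp [ha_def, hb_def]
  have hterm : ∀ t : ℝ, 1 + 4*L^2*Real.sin t ^ 2 = a - b * Real.cos (2*t) := by
    intro t
    rw [Real.sin_sq_eq_half_sub, ha_def, hb_def]
    ring
  have hLrw : ∀ r : ℕ, ((1 + 4*L^2*Real.sin (Real.pi*((i:ℝ)+r*m)/(ζ*m))^2)^M)⁻¹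
      = ((a - b*Real.cos (2*Real.pi*((i:ℝ)+r*m)/(ζ*m)))^M)⁻¹ := by
    intro r
    rw [hterm, show 2*(Real.pi*((i:ℝ)+r*m)/(ζ*m)) = 2*Real.pi*((i:ℝ)+r*m)/(ζ*m) from by ring]
  have hRrw : ∀ r : ℕ, ((1 + 4*L^2*Real.sin (Real.pi*(r:ℝ)/ζ)^2)^M)⁻¹
      = ((a - b*Real.cos (2*Real.pi*(r:ℝ)/ζ))^M)⁻¹ := by
    intro r
    rw [hterm, show 2*(Real.pi*(r:ℝ)/ζ) = 2*Real.pi*(r:ℝ)/ζ from by ring]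
  rw [Finset.sum_congr rfl fun r _ => hLrw r, Finset.sum_congr rfl fun r _ => hRrw r]
  have hLHS : HasSum
      (fun n : ℕ => ((n + (M-1)).choose (M-1) : ℝ) * (b/a)^n / a^M *
        ∑ r ∈ Finset.range ζ, Real.cos (2*Real.pi*((i:ℝ)+r*m)/(ζ*m)) ^ n)
      (∑ r ∈ Finset.range ζ, ((a - b*Real.cos (2*Real.pi*((i:ℝ)+r*m)/(ζ*m)))^M)⁻¹) := by
    have h := hasSum_sum (s := Finset.range ζ)
      (f := fun (r : ℕ) (n : ℕ) => ((n + (M-1)).choose (M-1) : ℝ) * (b/a)^n / a^M *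
        (Real.cos (2*Real.pi*((i:ℝ)+r*m)/(ζ*m)))^n)
      (a := fun r => ((a - b*Real.cos (2*Real.pi*((i:ℝ)+r*m)/(ζ*m)))^M)⁻¹)
      (fun r _ => hasSum_inv_pow ha hb hba M hM _ (Real.abs_cos_le_one _))
    convert h using 1
    funext n
    rw [Finset.mul_sum]
  have hRHS : HasSum
      (fun n : ℕ => ((n + (M-1)).choose (M-1) : ℝ) * (b/a)^n / a^M *
        ∑ r ∈ Finset.range ζ, Real.cos (2*Real.pi*(r:ℝ)/ζ) ^ n)
      (∑ r ∈ Finset.range ζ, ((a - b*Real.cos (2*Real.pi*(r:ℝ)/ζ))^M)⁻¹) := by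
    have h := hasSum_sum (s := Finset.range ζ)
      (f := fun (r : ℕ) (n : ℕ) => ((n + (M-1)).choose (M-1) : ℝ) * (b/a)^n / a^M *
        (Real.cos (2*Real.pi*(r:ℝ)/ζ))^n)
      (a := fun r => ((a - b*Real.cos (2*Real.pi*(r:ℝ)/ζ))^M)⁻¹)
      (fun r _ => hasSum_inv_pow ha hb hba M hM _ (Real.abs_cos_le_one _))
    convert h using 1
    funext n
    rw [Finset.mul_sum]
  refine hasSum_le (fun n => ?_) hLHS hRHS
  refine mul_le_mul_of_nonneg_left (cos_pow_sum_le m ζ hm hζ i n) (by positivity)
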